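/- Let (X_t) be a conservative strong Markov process on ℝ^d with transition density p(t,x,y) satisfying p(t,x,y) ≤ c t^{−d/2} for all t > 0 and q.e. x, y. Then there is a constant c₁ > 0 such that for every x₀ ∈ ℝ^d, r > 0 and x ∈ B(x₀,r), the expected exit time satisfies E_x[τ_{B(x₀,r)}] ≤ c₁ r². -/

import Mathlib

open MeasureTheory ENNReal

/-- Auxiliary: pointwise layer-cake type bound. -/
lemma aux_layer (t₀ : ℝ) (ht₀ : 0 < t₀) (a : ℝ) :
    ENNReal.ofReal a ≤ ∑' k : ℕ, (if (k : ℝ) * t₀ < a then ENNReal.ofReal t₀ else 0) := by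
  rcases le_or_gt a 0 with ha | ha
  · simp [ENNReal.ofReal_eq_zero.mpr ha]
  · have hex : ∃ n : ℕ, a ≤ (n : ℝ) * t₀ := by
      obtain ⟨n, hn⟩ := exists_nat_ge (a / t₀)
      exact ⟨n, by rwa [div_le_iff₀ ht₀] at hn⟩
    set n := Nat.find hex with hn
    have hle : a ≤ (n : ℝ) * t₀ := Nat.find_spec hex
    have hmin : ∀ k < n, (k : ℝ) * t₀ < a := by
      intro k hk
      have := Nat.find_min hex hk
      push_neg at this
      exact this
    calc ENNReal.ofReal a ≤ ENNReal.ofReal ((n : ℝ) * t₀) := ENNReal.ofReal_le_ofReal hle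
      _ = (n : ℝ≥0∞) * ENNReal.ofReal t₀ := by
          rw [ENNReal.ofReal_mul (by positivity), ENNReal.ofReal_natCast]
      _ = ∑ k ∈ Finset.range n, (if (k : ℝ) * t₀ < a then ENNReal.ofReal t₀ else 0) := by
          rw [Finset.sum_congr rfl (fun k hk => if_pos (hmin k (Finset.mem_range.mp hk)))]
          simp [Finset.sum_const, mul_comm]
      _ ≤ ∑' k : ℕ, (if (k : ℝ) * t₀ < a then ENNReal.ofReal t₀ else 0) :=
          ENNReal.sum_le_tsum _

theorem stmt_6 (d : ℕ) (hd : 1 ≤ d) {Ω : Type*} [MeasurableSpace Ω]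
    (P : EuclideanSpace ℝ (Fin d) → Measure Ω)
    (hP : ∀ x, IsProbabilityMeasure (P x))
    (X : ℝ → Ω → EuclideanSpace ℝ (Fin d))
    (p : ℝ → EuclideanSpace ℝ (Fin d) → EuclideanSpace ℝ (Fin d) → ℝ)
    (c : ℝ) (hc : 0 < c)
    (hdens : ∀ t : ℝ, 0 < t → ∀ x, ∀ s : Set (EuclideanSpace ℝ (Fin d)),
      MeasurableSet s → P x {ω | X t ω ∈ s} = ∫⁻ y in s, ENNReal.ofReal (p t x y))
    (hub : ∀ t : ℝ, 0 < t → ∀ x y, p t x y ≤ c * t ^ (-(d : ℝ) / 2))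
    (τ : EuclideanSpace ℝ (Fin d) → ℝ → Ω → ℝ)
    (hτ : ∀ x₀ r ω, τ x₀ r ω = sInf {t : ℝ | 0 < t ∧ X t ω ∉ Metric.ball x₀ r})
    (hmarkov : ∀ x₀ r x (t s : ℝ), 0 < t → 0 < s →
      P x {ω | t + s < τ x₀ r ω} ≤
        ∫⁻ ω in {ω | t < τ x₀ r ω}, P (X t ω) {ω' | s < τ x₀ r ω'} ∂ (P x)) :
    ∃ c₁ : ℝ, 0 < c₁ ∧ ∀ x₀ (r : ℝ), 0 < r → ∀ x ∈ Metric.ball x₀ r,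
      ∫⁻ ω, ENNReal.ofReal (τ x₀ r ω) ∂ (P x) ≤ ENNReal.ofReal (c₁ * r ^ 2) := by
  haveI : Nonempty (Fin d) := ⟨⟨0, hd⟩⟩
  haveI : Nontrivial (EuclideanSpace ℝ (Fin d)) := inferInstance
  have hd0 : (d : ℝ) ≠ 0 := Nat.cast_ne_zero.mpr (by omega)
  set V : ℝ≥0∞ := volume (Metric.ball (0 : EuclideanSpace ℝ (Fin d)) 1) with hV
  have hVpos : 0 < V := Metric.measure_ball_pos _ _ one_pos
  have hVlt : V < ⊤ := measure_ball_lt_top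
  have hVr : 0 < V.toReal := ENNReal.toReal_pos hVpos.ne' hVlt.ne
  set M : ℝ := max 1 (2 * c * V.toReal) with hM
  have hM1 : (1 : ℝ) ≤ M := le_max_left _ _
  have hM0 : 0 < M := lt_of_lt_of_le one_pos hM1
  set c₂ : ℝ := M ^ (2 / (d : ℝ)) with hc₂
  have hc₂0 : 0 < c₂ := Real.rpow_pos_of_pos hM0 _
  have hc₂pow : c₂ ^ (-(d : ℝ) / 2) = M⁻¹ := by
    rw [hc₂, ← Real.rpow_mul hM0.le,
      show 2 / (d : ℝ) * (-(d : ℝ) / 2) = -1 by field_simp,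
      Real.rpow_neg_one]
  refine ⟨2 * c₂, by positivity, ?_⟩
  intro x₀ r hr x hx
  set t₀ : ℝ := c₂ * r ^ 2 with ht₀def
  have ht₀ : 0 < t₀ := by positivity
  -- the volume of the ball
  have hvol : volume (Metric.ball x₀ r) = ENNReal.ofReal (r ^ d) * V := by
    rw [hV, Measure.addHaar_ball _ _ hr.le, finrank_euclideanSpace_fin]
  -- rpow computation
  have ht₀pow : t₀ ^ (-(d : ℝ) / 2) = M⁻¹ * ((r : ℝ) ^ d)⁻¹ := by
    have h1 : t₀ ^ (-(d : ℝ) / 2) = c₂ ^ (-(d : ℝ) / 2) * (r ^ 2) ^ (-(d : ℝ) / 2) :=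
      Real.mul_rpow hc₂0.le (by positivity)
    have h2 : ((r : ℝ) ^ 2) ^ (-(d : ℝ) / 2) = ((r : ℝ) ^ d)⁻¹ := by
      rw [← Real.rpow_natCast r 2, ← Real.rpow_mul hr.le,
        show ((2 : ℕ) : ℝ) * (-(d : ℝ) / 2) = -(d : ℝ) by push_cast; ring,
        Real.rpow_neg hr.le, Real.rpow_natCast]
    rw [h1, h2, hc₂pow]
  -- step 1: for every starting point the process is in the ball at time t₀ with prob ≤ 1/2
  have hhalf : ∀ y, P y {ω | X t₀ ω ∈ Metric.ball x₀ r} ≤ 2⁻¹ := by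
    intro y
    rw [hdens t₀ ht₀ y _ Metric.isOpen_ball.measurableSet]
    have hb : ∫⁻ z in Metric.ball x₀ r, ENNReal.ofReal (p t₀ y z) ≤
        ∫⁻ _ in Metric.ball x₀ r, ENNReal.ofReal (c * t₀ ^ (-(d : ℝ) / 2)) :=
      lintegral_mono fun z => ENNReal.ofReal_le_ofReal (hub t₀ ht₀ y z)
    refine le_trans hb ?_
    rw [setLIntegral_const, hvol, ← mul_assoc, ← ENNReal.ofReal_mul (by positivity),
      ht₀pow, ← ENNReal.ofReal_toReal hVlt.ne, ← ENNReal.ofReal_mul (by positivity)]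
    have harith : c * (M⁻¹ * ((r : ℝ) ^ d)⁻¹) * r ^ d * V.toReal = c * V.toReal / M := by
      have : (r : ℝ) ^ d ≠ 0 := by positivity
      field_simp
    rw [harith]
    have hle : c * V.toReal / M ≤ 1 / 2 := by
      rw [div_le_iff₀ hM0]
      have := le_max_right 1 (2 * c * V.toReal)
      nlinarith
    calc ENNReal.ofReal (c * V.toReal / M) ≤ ENNReal.ofReal (1 / 2) :=
          ENNReal.ofReal_le_ofReal hle
      _ = 2⁻¹ := by norm_num [ENNReal.ofReal_div_of_pos]
  -- step 2: exit time exceeds t₀ with probability at most 1/2, from any starting point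
  have hτhalf : ∀ y, P y {ω | t₀ < τ x₀ r ω} ≤ 2⁻¹ := by
    intro y
    refine le_trans (measure_mono ?_) (hhalf y)
    intro ω hω
    simp only [Set.mem_setOf_eq] at hω ⊢
    by_contra hX
    have hbdd : BddBelow {t : ℝ | 0 < t ∧ X t ω ∉ Metric.ball x₀ r} :=
      ⟨0, fun s hs => hs.1.le⟩
    have : τ x₀ r ω ≤ t₀ := by
      rw [hτ]; exact csInf_le hbdd ⟨ht₀, hX⟩
    linarith
  -- step 3: iterate with the Markov property
  have hiter : ∀ k : ℕ, ∀ y, P y {ω | ((k : ℝ) + 1) * t₀ < τ x₀ r ω} ≤ 2⁻¹ ^ (k + 1) := by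
    intro k
    induction k with
    | zero =>
      intro y
      simpa using hτhalf y
    | succ k ih =>
      intro y
      have hset : {ω | (((k : ℕ) + 1 : ℕ) : ℝ) * t₀ + t₀ < τ x₀ r ω} =
          {ω | (((k + 1 : ℕ) : ℝ) + 1) * t₀ < τ x₀ r ω} := by
        ext ω
        simp only [Set.mem_setOf_eq]
        push_cast
        constructor <;> intro h <;> nlinarith
      have hkpos : (0 : ℝ) < ((k + 1 : ℕ) : ℝ) * t₀ := by positivity
      have hmk := hmarkov x₀ r y (((k + 1 : ℕ) : ℝ) * t₀) t₀ hkpos ht₀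
      rw [hset] at hmk
      refine le_trans hmk ?_
      have hb : ∫⁻ ω in {ω | ((k + 1 : ℕ) : ℝ) * t₀ < τ x₀ r ω},
          P (X (((k + 1 : ℕ) : ℝ) * t₀) ω) {ω' | t₀ < τ x₀ r ω'} ∂ (P y) ≤
          ∫⁻ _ in {ω | ((k + 1 : ℕ) : ℝ) * t₀ < τ x₀ r ω}, 2⁻¹ ∂ (P y) :=
        lintegral_mono fun ω => hτhalf _
      refine le_trans hb ?_
      rw [setLIntegral_const]
      have hset2 : {ω | ((k + 1 : ℕ) : ℝ) * t₀ < τ x₀ r ω} =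
          {ω | ((k : ℝ) + 1) * t₀ < τ x₀ r ω} := by
        ext ω; simp only [Set.mem_setOf_eq]; push_cast; tauto
      rw [hset2]
      calc 2⁻¹ * P y {ω | ((k : ℝ) + 1) * t₀ < τ x₀ r ω} ≤ 2⁻¹ * 2⁻¹ ^ (k + 1) :=
            mul_le_mul_right (ih y) _
        _ = 2⁻¹ ^ (k + 1 + 1) := by ring
  haveI := hP x
  have hall : ∀ k : ℕ, P x {ω | (k : ℝ) * t₀ < τ x₀ r ω} ≤ 2⁻¹ ^ k := by
    intro k
    cases k with
    | zero => simpa using prob_le_one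
    | succ k =>
      have := hiter k x
      have hset : {ω | ((k + 1 : ℕ) : ℝ) * t₀ < τ x₀ r ω} =
          {ω | ((k : ℝ) + 1) * t₀ < τ x₀ r ω} := by
        ext ω; simp only [Set.mem_setOf_eq]; push_cast; tauto
      rw [hset]
      exact this
  -- conclude
  set A : ℕ → Set Ω := fun k => {ω | (k : ℝ) * t₀ < τ x₀ r ω} with hA
  set B : ℕ → Set Ω := fun k => toMeasurable (P x) (A k) with hB
  have hpt : ∀ ω, ENNReal.ofReal (τ x₀ r ω) ≤
      ∑' k : ℕ, (B k).indicator (fun _ => ENNReal.ofReal t₀) ω := by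
    intro ω
    refine le_trans (aux_layer t₀ ht₀ (τ x₀ r ω)) (ENNReal.tsum_le_tsum fun k => ?_)
    by_cases hk : (k : ℝ) * t₀ < τ x₀ r ω
    · have hmem : ω ∈ B k := subset_toMeasurable (P x) (A k) hk
      rw [if_pos hk, Set.indicator_of_mem hmem]
    · simp [if_neg hk]
  calc ∫⁻ ω, ENNReal.ofReal (τ x₀ r ω) ∂ (P x) ≤
      ∫⁻ ω, ∑' k : ℕ, (B k).indicator (fun _ => ENNReal.ofReal t₀) ω ∂ (P x) :=
        lintegral_mono hpt
    _ = ∑' k : ℕ, ∫⁻ ω, (B k).indicator (fun _ => ENNReal.ofReal t₀) ω ∂ (P x) :=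
        lintegral_tsum fun k =>
          (measurable_const.indicator (measurableSet_toMeasurable _ _)).aemeasurable
    _ = ∑' k : ℕ, ENNReal.ofReal t₀ * P x (B k) :=
        tsum_congr fun k => lintegral_indicator_const (measurableSet_toMeasurable _ _) _
    _ = ∑' k : ℕ, ENNReal.ofReal t₀ * P x (A k) :=
        tsum_congr fun k => by rw [hB, measure_toMeasurable]
    _ ≤ ∑' k : ℕ, ENNReal.ofReal t₀ * 2⁻¹ ^ k :=
        ENNReal.tsum_le_tsum fun k => mul_le_mul_right (hall k) _
    _ = ENNReal.ofReal t₀ * 2 := by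
        rw [ENNReal.tsum_mul_left, ENNReal.tsum_geometric]
        norm_num
    _ ≤ ENNReal.ofReal (2 * c₂ * r ^ 2) := by
        rw [show (2 : ℝ≥0∞) = ENNReal.ofReal 2 by norm_num,
          ← ENNReal.ofReal_mul ht₀.le]
        exact ENNReal.ofReal_le_ofReal (by rw [ht₀def]; nlinarith)
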